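/- Let (M,d) be a compact metric space and h : M × M × (0,∞) → ℝ continuous. Assume there exist constants K > 0, B > 0 and δ_0 > 0 such that for every t ≥ δ_0: |h(x,y,t)| ≤ B for all x, y, and the map (x,y) ↦ h(x,y,t) is K-Lipschitz for the metric d(x_1,x_2) + d(y_1,y_2). Let u : M → ℝ be continuous, define H_t u(x) = inf_{y ∈ M} (u(y) + h(y,x,t)) for t > 0, define P(y,x) = liminf_{t→∞} h(y,x,t), and set v(x) = inf_{z ∈ M} (u(z) + P(z,x)). Then: (a) if t_n → ∞ is a sequence such that H_{t_n} u converges pointwise to a function ψ, then ψ(x) ≥ v(x) for all x ∈ M; (b) if H_t u(x) converges as t → ∞ for every x ∈ M, then the limit function equals v. -/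

import Mathlib

open Set Filter

/-- Any pointwise limit of the Lax–Oleinik semigroup `H_t u` along some
sequence of times dominates `v(x) = inf_z (u(z) + P(z,x))`; if `H_t u` converges
pointwise as `t → ∞`, the limit is exactly `v`. -/
theorem stmt_15 {M : Type*} [MetricSpace M] [CompactSpace M] [Nonempty M]
    (h : M → M → ℝ → ℝ)
    (hcont : ContinuousOn (fun p : M × M × ℝ => h p.1 p.2.1 p.2.2)
      ((univ : Set M) ×ˢ (univ : Set M) ×ˢ Ioi (0:ℝ)))
    (K B δ₀ : ℝ) (hK : 0 < K) (hB : 0 < B) (hδ₀ : 0 < δ₀)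
    (hbound : ∀ t ≥ δ₀, ∀ x y : M, |h x y t| ≤ B)
    (hlip : ∀ t ≥ δ₀, ∀ x₁ x₂ y₁ y₂ : M,
      |h x₁ y₁ t - h x₂ y₂ t| ≤ K * (dist x₁ x₂ + dist y₁ y₂))
    (u : M → ℝ) (hu : Continuous u)
    (P : M → M → ℝ) (hP : ∀ y x : M, P y x = liminf (fun t : ℝ => h y x t) atTop)
    (v : M → ℝ) (hv : ∀ x : M, v x = ⨅ z : M, (u z + P z x)) :
    (∀ (tn : ℕ → ℝ) (ψ : M → ℝ), Tendsto tn atTop atTop →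
      (∀ x : M, Tendsto (fun n => ⨅ y : M, (u y + h y x (tn n))) atTop (nhds (ψ x))) →
      ∀ x : M, v x ≤ ψ x) ∧
    ((∀ x : M, ∃ l : ℝ,
        Tendsto (fun t : ℝ => ⨅ y : M, (u y + h y x t)) atTop (nhds l)) →
      ∀ x : M, Tendsto (fun t : ℝ => ⨅ y : M, (u y + h y x t)) atTop (nhds (v x))) := by
  -- a minimum point of u
  obtain ⟨m, -, hm⟩ := isCompact_univ.exists_isMinOn univ_nonempty hu.continuousOn
  have hmle : ∀ y : M, u m ≤ u y := fun y => hm (mem_univ y)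
  -- continuity in y for fixed x, t > 0
  have hconty : ∀ (x : M) (t : ℝ), 0 < t → Continuous fun y : M => u y + h y x t := by
    intro x t ht
    have hg : Continuous fun y : M => ((y, x, t) : M × M × ℝ) := by continuity
    have : Continuous fun y : M => h y x t :=
      hcont.comp_continuous hg (fun y => by
        simp only [Set.mem_prod, mem_univ, true_and, Set.mem_Ioi]; exact ht)
    exact hu.add this
  -- the infimum is attained and is a lower bound
  have hmin : ∀ (x : M) (t : ℝ), 0 < t → ∃ y0 : M,
      (⨅ y : M, (u y + h y x t)) = u y0 + h y0 x t ∧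
      ∀ z : M, (⨅ y : M, (u y + h y x t)) ≤ u z + h z x t := by
    intro x t ht
    obtain ⟨y0, -, hy0⟩ :=
      isCompact_univ.exists_isMinOn univ_nonempty (hconty x t ht).continuousOn
    have hbdd : BddBelow (range fun y : M => u y + h y x t) := by
      refine ⟨u y0 + h y0 x t, ?_⟩
      rintro _ ⟨y, rfl⟩
      exact hy0 (mem_univ y)
    have hle : ∀ z : M, (⨅ y : M, (u y + h y x t)) ≤ u z + h z x t :=
      fun z => ciInf_le hbdd z
    exact ⟨y0, le_antisymm (hle y0) (le_ciInf fun y => hy0 (mem_univ y)), hle⟩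
  -- P is bounded below by -B
  have hPbound : ∀ z x : M, -B ≤ P z x := by
    intro z x
    rw [hP]
    refine le_liminf_of_le ?_ ?_
    · exact isCoboundedUnder_ge_of_eventually_le atTop
        ((eventually_ge_atTop δ₀).mono fun t ht => (abs_le.1 (hbound t ht z x)).2)
    · exact (eventually_ge_atTop δ₀).mono fun t ht => (abs_le.1 (hbound t ht z x)).1
  have hvbdd : ∀ x : M, BddBelow (range fun z : M => u z + P z x) := by
    intro x
    refine ⟨u m + -B, ?_⟩
    rintro _ ⟨z, rfl⟩
    exact add_le_add (hmle z) (hPbound z x)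
  -- the key claim
  have key : ∀ (tn : ℕ → ℝ) (ψx : ℝ) (x : M), Tendsto tn atTop atTop →
      (∀ n, δ₀ ≤ tn n) →
      Tendsto (fun n => ⨅ y : M, (u y + h y x (tn n))) atTop (nhds ψx) →
      v x ≤ ψx := by
    intro tn ψx x htn hδ hconv
    choose y hy1 hy2 using fun n => hmin x (tn n) (hδ₀.trans_le (hδ n))
    obtain ⟨z, φ, hφ, hyz⟩ := CompactSpace.tendsto_subseq y
    have hsφ : Tendsto (fun k => tn (φ k)) atTop atTop := htn.comp hφ.tendsto_atTop
    have hHφ : Tendsto (fun k => ⨅ y : M, (u y + h y x (tn (φ k)))) atTop (nhds ψx) :=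
      hconv.comp hφ.tendsto_atTop
    have huy : Tendsto (fun k => u (y (φ k))) atTop (nhds (u z)) :=
      (hu.tendsto z).comp hyz
    have hdist : Tendsto (fun k => dist z (y (φ k))) atTop (nhds 0) := by
      have := (tendsto_iff_dist_tendsto_zero).1 hyz
      simpa [Function.comp, dist_comm] using this
    have hb : Tendsto
        (fun k => (⨅ y : M, (u y + h y x (tn (φ k)))) - u (y (φ k)) + K * dist z (y (φ k)))
        atTop (nhds (ψx - u z + K * 0)) :=
      (hHφ.sub huy).add (tendsto_const_nhds.mul hdist)
    have hpt : ∀ k, h z x (tn (φ k)) ≤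
        (⨅ y : M, (u y + h y x (tn (φ k)))) - u (y (φ k)) + K * dist z (y (φ k)) := by
      intro k
      have hl := hlip (tn (φ k)) (hδ _) z (y (φ k)) x x
      have h2 : h z x (tn (φ k)) - h (y (φ k)) x (tn (φ k)) ≤ K * dist z (y (φ k)) := by
        have := (abs_le.1 hl).2
        simpa [dist_self] using this
      have h1 := hy1 (φ k)
      linarith
    have e1 : P z x ≤ liminf (fun k => h z x (tn (φ k))) atTop := by
      rw [hP]
      have hc : liminf (fun k => h z x (tn (φ k))) atTop
          = liminf (fun t => h z x t) (map (fun k => tn (φ k)) atTop) :=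
        liminf_comp (fun t => h z x t) (fun k => tn (φ k)) atTop
      rw [hc]
      refine liminf_le_liminf_of_le hsφ ?_ ?_
      · exact isBoundedUnder_of_eventually_ge
          ((eventually_ge_atTop δ₀).mono fun t ht => (abs_le.1 (hbound t ht z x)).1)
      · exact isCoboundedUnder_ge_of_eventually_le _
          (eventually_map.2 (Eventually.of_forall fun k => (abs_le.1 (hbound _ (hδ _) z x)).2))
    have e2 : liminf (fun k => h z x (tn (φ k))) atTop ≤ ψx - u z := by
      have hle := liminf_le_liminf (Eventually.of_forall hpt)
        (isBoundedUnder_of_eventually_ge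
          (Eventually.of_forall fun k => (abs_le.1 (hbound _ (hδ _) z x)).1))
        (hb.isBoundedUnder_le.isCoboundedUnder_ge)
      have := hb.liminf_eq
      rw [this] at hle
      linarith
    rw [hv]
    calc (⨅ z' : M, (u z' + P z' x)) ≤ u z + P z x := ciInf_le (hvbdd x) z
      _ ≤ ψx := by linarith
  constructor
  · -- part (a)
    intro tn ψ htn hconv x
    obtain ⟨N, hN⟩ := (htn.eventually (eventually_ge_atTop δ₀)).exists_forall_of_atTop
    refine key (fun k => tn (k + N)) (ψ x) x (htn.comp (tendsto_add_atTop_nat N))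
      (fun k => hN (k + N) (Nat.le_add_left N k)) ?_
    exact (hconv x).comp (tendsto_add_atTop_nat N)
  · -- part (b)
    intro hconv x
    choose l hl using hconv
    have htn : Tendsto (fun n : ℕ => δ₀ + (n : ℝ)) atTop atTop :=
      tendsto_atTop_add_const_left atTop δ₀ tendsto_natCast_atTop_atTop
    have hva : ∀ x' : M, v x' ≤ l x' := by
      intro x'
      refine key (fun n => δ₀ + (n : ℝ)) (l x') x' htn
        (fun n => le_add_of_nonneg_right (Nat.cast_nonneg n)) ?_
      exact (hl x').comp htn
    have hlv : ∀ x' : M, l x' ≤ v x' := by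
      intro x'
      rw [hv]
      refine le_ciInf fun z => ?_
      have hlim : l x' = liminf (fun t : ℝ => ⨅ y : M, (u y + h y x' t)) atTop :=
        ((hl x').liminf_eq).symm
      rw [hlim]
      have ev : ∀ᶠ t in atTop, (⨅ y : M, (u y + h y x' t)) ≤ u z + h z x' t :=
        (eventually_ge_atTop δ₀).mono fun t ht => by
          obtain ⟨y0, -, hle⟩ := hmin x' t (hδ₀.trans_le ht)
          exact hle z
      have bd : IsBoundedUnder (· ≥ ·) atTop (fun t : ℝ => ⨅ y : M, (u y + h y x' t)) := by
        refine isBoundedUnder_of_eventually_ge (a := u m + -B)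
          ((eventually_ge_atTop δ₀).mono fun t ht => ?_)
        obtain ⟨y0, hy0, -⟩ := hmin x' t (hδ₀.trans_le ht)
        rw [hy0]
        exact add_le_add (hmle y0) (abs_le.1 (hbound t ht y0 x')).1
      have cobdd : IsCoboundedUnder (· ≥ ·) atTop (fun t : ℝ => h z x' t) :=
        isCoboundedUnder_ge_of_eventually_le atTop
          ((eventually_ge_atTop δ₀).mono fun t ht => (abs_le.1 (hbound t ht z x')).2)
      have bdd : IsBoundedUnder (· ≥ ·) atTop (fun t : ℝ => h z x' t) :=
        isBoundedUnder_of_eventually_ge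
          ((eventually_ge_atTop δ₀).mono fun t ht => (abs_le.1 (hbound t ht z x')).1)
      have cb2 : IsCoboundedUnder (· ≥ ·) atTop (fun t : ℝ => u z + h z x' t) :=
        isCoboundedUnder_ge_of_eventually_le atTop
          ((eventually_ge_atTop δ₀).mono fun t ht =>
            add_le_add_right ((abs_le.1 (hbound t ht z x')).2) (u z))
      calc liminf (fun t : ℝ => ⨅ y : M, (u y + h y x' t)) atTop
          ≤ liminf (fun t : ℝ => u z + h z x' t) atTop := liminf_le_liminf ev bd cb2
        _ = u z + liminf (fun t : ℝ => h z x' t) atTop :=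
            liminf_const_add atTop (fun t : ℝ => h z x' t) (u z) cobdd bdd
        _ = u z + P z x' := by rw [hP]
    have hvl : v x = l x := le_antisymm (hva x) (hlv x)
    rw [hvl]
    exact hl x
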